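/- For every integer h > 3, there exists an approving configuration with parameters (n, d, h) where n = 4h - 3 and d = 2h - 1. -/

import Mathlib

open Finset
open scoped Classical

/-- The closed neighborhood `N[v] = {v} ∪ N(v)` of a vertex `v` in a simple graph `G`.
A `d`-regular graph with loops is modeled by a simple graph in which every
closed neighborhood has size `d`. -/
noncomputable def closedNbhd {n : ℕ} (G : SimpleGraph (Fin n)) (v : Fin n) : Finset (Fin n) :=
  Finset.univ.filter fun u => u = v ∨ G.Adj v u

/-- A configuration with parameters `(n, d, h)`: a simple graph `G` on `n` vertices all
of whose closed neighborhoods have size `d` (i.e. a `d`-regular graph with loops),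
together with an opinion function `f : V → {1, -1}` having exactly `h` happy vertices. -/
def IsConfig {n : ℕ} (d h : ℕ) (G : SimpleGraph (Fin n)) (f : Fin n → ℤ) : Prop :=
  (∀ v, (closedNbhd G v).card = d) ∧ (∀ v, f v = 1 ∨ f v = -1) ∧
  (Finset.univ.filter fun v => f v = 1).card = h

/-- The number of proponents: vertices `v` with `∑_{u ∈ N[v]} f u ≥ 1`. -/
noncomputable def numProponents {n : ℕ} (G : SimpleGraph (Fin n)) (f : Fin n → ℤ) : ℕ :=
  (Finset.univ.filter fun v => 1 ≤ ∑ u ∈ closedNbhd G v, f u).card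

/-- A configuration is approving if more than `n/2` of its vertices are proponents. -/
def IsApproving {n : ℕ} (G : SimpleGraph (Fin n)) (f : Fin n → ℤ) : Prop :=
  2 * numProponents G f > n

/-- `hmin n d`: the least `h` for which an approving configuration with parameters
`(n, d, h)` exists. -/
noncomputable def hmin (n d : ℕ) : ℕ :=
  sInf {h : ℕ | ∃ (G : SimpleGraph (Fin n)) (f : Fin n → ℤ), IsConfig d h G f ∧ IsApproving G f}

/-- `hmax n d`: the greatest `h ≤ n` for which a disapproving configuration with parameters
`(n, d, h)` exists. -/
noncomputable def hmax (n d : ℕ) : ℕ :=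
  sSup {h : ℕ | h ≤ n ∧
    ∃ (G : SimpleGraph (Fin n)) (f : Fin n → ℤ), IsConfig d h G f ∧ ¬ IsApproving G f}

/-- `hminN n`: the minimum of `hmin n d` over odd `d` with `1 ≤ d ≤ n`. -/
noncomputable def hminN (n : ℕ) : ℕ :=
  sInf {m : ℕ | ∃ d : ℕ, Odd d ∧ 1 ≤ d ∧ d ≤ n ∧ m = hmin n d}


namespace Stmt7Aux

/-- Cycle adjacency on `{0, …, h-2}` (removed edges inside the sad part of `P`). -/
def cyc (h a b : ℕ) : Prop :=
  b = a + 1 ∨ a = b + 1 ∨ (a = 0 ∧ b = h - 2) ∨ (b = 0 ∧ a = h - 2)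

/-- The adjacency relation (on vertex values) of the construction. -/
def rel (h x y : ℕ) : Prop :=
  (x < 2*h-1 ∧ y < 2*h-1 ∧ ¬(h ≤ x ∧ h ≤ y ∧ cyc h (x-h) (y-h)))
  ∨ (2*h-1 ≤ x ∧ 2*h-1 ≤ y)
  ∨ (h ≤ x ∧ x < 2*h-1 ∧ (y = 2*h-1 + 2*(x-h) ∨ y = 2*h + 2*(x-h)))
  ∨ (h ≤ y ∧ y < 2*h-1 ∧ (x = 2*h-1 + 2*(y-h) ∨ x = 2*h + 2*(y-h)))

lemma rel_symm {h x y : ℕ} : rel h x y → rel h y x := by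
  unfold rel cyc; tauto

lemma rel_refl {h x : ℕ} (hh : 4 ≤ h) : rel h x x := by
  unfold rel cyc; omega

/-- The graph of the construction. -/
def G (h : ℕ) : SimpleGraph (Fin (4*h-3)) :=
  SimpleGraph.fromRel (fun u v => rel h u.val v.val)

/-- The opinion function: the first `h` vertices are happy. -/
noncomputable def f (h : ℕ) : Fin (4*h-3) → ℤ := fun u => if u.val < h then 1 else -1

lemma mem_closed {h : ℕ} (hh : 4 ≤ h) (v u : Fin (4*h-3)) :
    u ∈ closedNbhd (G h) v ↔ rel h v.val u.val := by
  simp only [closedNbhd, mem_filter, mem_univ, true_and, G, SimpleGraph.fromRel_adj]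
  constructor
  · rintro (rfl | ⟨-, h1 | h2⟩)
    · exact rel_refl hh
    · exact h1
    · exact rel_symm h2
  · intro hr
    by_cases he : u = v
    · exact Or.inl he
    · exact Or.inr ⟨fun e => he e.symm, Or.inl hr⟩

lemma card_lt_filter {n k : ℕ} (hk : k ≤ n) :
    (univ.filter fun u : Fin n => u.val < k).card = k := by
  have : (univ.filter fun u : Fin n => u.val < k)
      = Finset.image (Fin.castLE hk) univ := by
    ext u
    simp only [mem_filter, mem_univ, true_and, mem_image]
    constructor
    · intro hu; exact ⟨⟨u.val, hu⟩, rfl⟩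
    · rintro ⟨a, rfl⟩; exact a.isLt
  rw [this, Finset.card_image_of_injective _ (Fin.castLE_injective hk)]
  simp

lemma card_happy {h : ℕ} (hh : 4 ≤ h) (v : Fin (4*h-3)) (hv : v.val < h) :
    (closedNbhd (G h) v).card = 2*h-1 := by
  have : closedNbhd (G h) v = univ.filter fun u : Fin (4*h-3) => u.val < 2*h-1 := by
    ext u
    rw [mem_closed hh, mem_filter]
    simp only [mem_univ, true_and]
    unfold rel cyc
    have := u.isLt
    omega
  rw [this, card_lt_filter (by omega)]

set_option maxHeartbeats 1600000 in
lemma card_sad {h : ℕ} (hh : 4 ≤ h) (v : Fin (4*h-3)) (hv : h ≤ v.val) (hv2 : v.val < 2*h-1) :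
    (closedNbhd (G h) v).card = 2*h-1 := by
  obtain ⟨a, hav⟩ : ∃ a : Fin (4*h-3), a.val = (if v.val = 2*h-2 then h else v.val+1) :=
    ⟨⟨if v.val = 2*h-2 then h else v.val+1, by split <;> omega⟩, rfl⟩
  obtain ⟨b, hbv⟩ : ∃ b : Fin (4*h-3), b.val = (if v.val = h then 2*h-2 else v.val-1) :=
    ⟨⟨if v.val = h then 2*h-2 else v.val-1, by split <;> omega⟩, rfl⟩
  obtain ⟨c, hc⟩ : ∃ c : Fin (4*h-3), c.val = 2*h-1 + 2*(v.val-h) := ⟨⟨_, by omega⟩, rfl⟩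
  obtain ⟨d, hd⟩ : ∃ d : Fin (4*h-3), d.val = 2*h + 2*(v.val-h) := ⟨⟨_, by omega⟩, rfl⟩
  have key : closedNbhd (G h) v
      = ((univ.filter fun u : Fin (4*h-3) => u.val < 2*h-1) \ {a, b}) ∪ {c, d} := by
    ext u
    rw [mem_closed hh]
    simp only [mem_union, mem_sdiff, mem_filter, mem_univ, true_and, mem_insert,
      mem_singleton, Fin.ext_iff, hav, hbv, hc, hd]
    unfold rel cyc
    have := u.isLt
    split_ifs <;> omega
  rw [key]
  have hdisj : Disjoint ((univ.filter fun u : Fin (4*h-3) => u.val < 2*h-1) \ {a, b})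
      ({c, d} : Finset (Fin (4*h-3))) := by
    rw [Finset.disjoint_left]
    intro u hu hu2
    simp only [mem_sdiff, mem_filter, mem_univ, true_and] at hu
    simp only [mem_insert, mem_singleton, Fin.ext_iff, hc, hd] at hu2
    omega
  rw [Finset.card_union_of_disjoint hdisj, Finset.card_sdiff_of_subset, card_lt_filter (by omega)]
  · have h1 : ({a, b} : Finset (Fin (4*h-3))).card = 2 := by
      rw [Finset.card_pair]
      simp only [Ne, Fin.ext_iff, hav, hbv]
      split_ifs <;> omega
    have h2 : ({c, d} : Finset (Fin (4*h-3))).card = 2 := by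
      rw [Finset.card_pair]
      simp only [Ne, Fin.ext_iff, hc, hd]
      omega
    omega
  · intro u hu
    simp only [mem_insert, mem_singleton, Fin.ext_iff, hav, hbv] at hu
    simp only [mem_filter, mem_univ, true_and]
    rcases hu with h1 | h1 <;> rw [h1] <;> split_ifs <;> omega

set_option maxHeartbeats 1600000 in
lemma card_q {h : ℕ} (hh : 4 ≤ h) (v : Fin (4*h-3)) (hv : 2*h-1 ≤ v.val) :
    (closedNbhd (G h) v).card = 2*h-1 := by
  obtain ⟨e, he⟩ : ∃ e : Fin (4*h-3), e.val = h + (v.val - (2*h-1))/2 :=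
    ⟨⟨_, by have := v.isLt; omega⟩, rfl⟩
  have key : closedNbhd (G h) v
      = (univ.filter fun u : Fin (4*h-3) => ¬ u.val < 2*h-1) ∪ {e} := by
    ext u
    rw [mem_closed hh]
    simp only [mem_union, mem_filter, mem_univ, true_and, mem_singleton, Fin.ext_iff, he]
    unfold rel cyc
    have := u.isLt
    have := v.isLt
    omega
  rw [key]
  have hdisj : Disjoint (univ.filter fun u : Fin (4*h-3) => ¬ u.val < 2*h-1)
      ({e} : Finset (Fin (4*h-3))) := by
    rw [Finset.disjoint_left]
    intro u hu hu2
    simp only [mem_filter, mem_univ, true_and] at hu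
    simp only [mem_singleton, Fin.ext_iff, he] at hu2
    have := v.isLt
    omega
  rw [Finset.card_union_of_disjoint hdisj, Finset.card_singleton]
  have := Finset.card_filter_add_card_filter_not
    (s := (univ : Finset (Fin (4*h-3)))) (p := fun u : Fin (4*h-3) => u.val < 2*h-1)
  rw [card_lt_filter (n := 4*h-3) (k := 2*h-1) (by omega)] at this
  simp only [Finset.card_univ, Fintype.card_fin] at this
  omega

lemma card_all {h : ℕ} (hh : 4 ≤ h) (v : Fin (4*h-3)) :
    (closedNbhd (G h) v).card = 2*h-1 := by
  rcases lt_or_ge v.val h with hv | hv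
  · exact card_happy hh v hv
  · rcases lt_or_ge v.val (2*h-1) with hv2 | hv2
    · exact card_sad hh v hv hv2
    · exact card_q hh v hv2

lemma sum_ge {h : ℕ} (hh : 4 ≤ h) (v : Fin (4*h-3)) (hv : v.val < 2*h-1) :
    1 ≤ ∑ u ∈ closedNbhd (G h) v, f h u := by
  have hsub : (univ.filter fun u : Fin (4*h-3) => u.val < h) ⊆ closedNbhd (G h) v := by
    intro u hu
    simp only [mem_filter, mem_univ, true_and] at hu
    rw [mem_closed hh]
    unfold rel cyc
    omega
  have h1 : ((closedNbhd (G h) v).filter fun u => u.val < h)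
      = univ.filter fun u : Fin (4*h-3) => u.val < h := by
    apply Finset.Subset.antisymm
    · intro u hu
      simp only [mem_filter, mem_univ, true_and] at *
      exact hu.2
    · intro u hu
      simp only [mem_filter, mem_univ, true_and] at *
      exact ⟨hsub (by simp [hu]), hu⟩
  have hc1 : ((closedNbhd (G h) v).filter fun u => u.val < h).card = h := by
    rw [h1, card_lt_filter (by omega)]
  have hc2 : ((closedNbhd (G h) v).filter fun u => ¬ u.val < h).card = h - 1 := by
    have := Finset.card_filter_add_card_filter_not
      (s := closedNbhd (G h) v) (p := fun u : Fin (4*h-3) => u.val < h)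
    rw [card_all hh, hc1] at this
    omega
  unfold f
  rw [Finset.sum_ite, Finset.sum_const, Finset.sum_const, hc1, hc2]
  ring_nf
  omega

end Stmt7Aux

/-- for every `h > 3` there is an approving configuration with
`n = 4h - 3` and `d = 2h - 1`. -/
theorem stmt7 (h : ℕ) (hh : 3 < h) :
    ∃ (G : SimpleGraph (Fin (4 * h - 3))) (f : Fin (4 * h - 3) → ℤ),
      IsConfig (2 * h - 1) h G f ∧ IsApproving G f := by
  have hh4 : 4 ≤ h := hh
  refine ⟨Stmt7Aux.G h, Stmt7Aux.f h,
    ⟨fun v => Stmt7Aux.card_all hh4 v, fun v => ?_, ?_⟩, ?_⟩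
  · unfold Stmt7Aux.f; split <;> simp
  · have : (univ.filter fun v : Fin (4*h-3) => Stmt7Aux.f h v = 1)
        = univ.filter fun v : Fin (4*h-3) => v.val < h := by
      ext v
      simp only [mem_filter, mem_univ, true_and, Stmt7Aux.f]
      by_cases hv : v.val < h <;> simp [hv]
    rw [this, Stmt7Aux.card_lt_filter (by omega)]
  · unfold IsApproving numProponents
    have hsub : (univ.filter fun u : Fin (4*h-3) => u.val < 2*h-1)
        ⊆ univ.filter fun v : Fin (4*h-3) =>
          1 ≤ ∑ u ∈ closedNbhd (Stmt7Aux.G h) v, Stmt7Aux.f h u := by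
      intro v hv
      simp only [mem_filter, mem_univ, true_and] at *
      exact Stmt7Aux.sum_ge hh4 v hv
    have := Finset.card_le_card hsub
    rw [Stmt7Aux.card_lt_filter (by omega)] at this
    omega
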